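/- Suppose d ≥ 0, c ≥ 0 and Assumptions 1–2 hold. For every u ∈ Θ_D, the perturbed problem min ⟨c + Mᵀu, x⟩ s.t. Ax = b, x ≥ 0 has an optimal solution, and for every optimal solution x*(u), the vector v = M(x*(u) − d) belongs to Θ_P. That is, the set-valued mapping Φ(u) = {M(x*(u) − d) : x*(u) optimal} is nonempty and Φ(u) ⊆ Θ_P. -/

import Mathlib

open Matrix

/-- Assumption 1: the row spaces of `A`, `B`, `M` are pairwise orthogonal
and their (direct) sum is all of `ℝⁿ`. -/
def Assumption1 {m l r n : ℕ} (A : Matrix (Fin m) (Fin n) ℝ)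
    (B : Matrix (Fin l) (Fin n) ℝ) (M : Matrix (Fin r) (Fin n) ℝ) : Prop :=
  (∀ wa wb, (Aᵀ *ᵥ wa) ⬝ᵥ (Bᵀ *ᵥ wb) = 0) ∧
  (∀ wa wm, (Aᵀ *ᵥ wa) ⬝ᵥ (Mᵀ *ᵥ wm) = 0) ∧
  (∀ wb wm, (Bᵀ *ᵥ wb) ⬝ᵥ (Mᵀ *ᵥ wm) = 0) ∧
  (LinearMap.range (Aᵀ).mulVecLin ⊔ LinearMap.range (Bᵀ).mulVecLin ⊔
      LinearMap.range (Mᵀ).mulVecLin = ⊤)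

/-- Assumption 2: `M Mᵀ = I`. -/
def Assumption2 {r n : ℕ} (M : Matrix (Fin r) (Fin n) ℝ) : Prop :=
  M * Mᵀ = 1

/-- Optimality for the LP `min ⟨cost, x⟩ s.t. Ax = Ad, x ≥ 0`. -/
def OptimalFor {m n : ℕ} (A : Matrix (Fin m) (Fin n) ℝ) (d cost x : Fin n → ℝ) : Prop :=
  A *ᵥ x = A *ᵥ d ∧ 0 ≤ x ∧
    ∀ x' : Fin n → ℝ, A *ᵥ x' = A *ᵥ d → 0 ≤ x' → cost ⬝ᵥ x ≤ cost ⬝ᵥ x'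

/-- The primal projection polyhedron `Θ_P`. -/
def ThetaP {m r n : ℕ} (A : Matrix (Fin m) (Fin n) ℝ)
    (M : Matrix (Fin r) (Fin n) ℝ) (d : Fin n → ℝ) : Set (Fin r → ℝ) :=
  {v | ∃ x : Fin n → ℝ, 0 ≤ x ∧ A *ᵥ x = A *ᵥ d ∧ M *ᵥ x = M *ᵥ d + v}

/-- The dual projection polyhedron `Θ_D`. -/
def ThetaD {l r n : ℕ} (B : Matrix (Fin l) (Fin n) ℝ)
    (M : Matrix (Fin r) (Fin n) ℝ) (c : Fin n → ℝ) : Set (Fin r → ℝ) :=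
  {u | ∃ y : Fin n → ℝ, 0 ≤ y ∧ B *ᵥ y = B *ᵥ c ∧ M *ᵥ y = M *ᵥ c + u}

/-- The set-valued mapping `Φ(u) = {M(x* - d) : x* optimal for the OFD-perturbed primal}`. -/
def Phi {m r n : ℕ} (A : Matrix (Fin m) (Fin n) ℝ) (M : Matrix (Fin r) (Fin n) ℝ)
    (c d : Fin n → ℝ) (u : Fin r → ℝ) : Set (Fin r → ℝ) :=
  {v | ∃ x : Fin n → ℝ, OptimalFor A d (c + Mᵀ *ᵥ u) x ∧ v = M *ᵥ (x - d)}

/-- The set-valued mapping `Ψ(v) = {M(y* - c) : y* optimal for the OFD-perturbed dual}`. -/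
def Psi {l r n : ℕ} (B : Matrix (Fin l) (Fin n) ℝ) (M : Matrix (Fin r) (Fin n) ℝ)
    (c d : Fin n → ℝ) (v : Fin r → ℝ) : Set (Fin r → ℝ) :=
  {u | ∃ y : Fin n → ℝ, OptimalFor B c (d + Mᵀ *ᵥ v) y ∧ u = M *ᵥ (y - c)}



section AuxLP
open Finset in
private lemma carath_aux {E : Type*} [AddCommGroup E] [Module ℝ E] {ι : Type*} [Fintype ι]
    (g : ι → E) :
    ∀ N : ℕ, ∀ c : ι → ℝ, (Finset.univ.filter (fun i => c i ≠ 0)).card ≤ N → 0 ≤ c →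
    ∃ c' : ι → ℝ, 0 ≤ c' ∧ ∑ i, c' i • g i = ∑ i, c i • g i ∧
      LinearIndependent ℝ (fun i : {i // c' i ≠ 0} => g i.1) := by
  classical
  intro N
  induction N with
  | zero =>
    intro c hcard hc
    refine ⟨c, hc, rfl, ?_⟩
    have hz : ∀ i, c i = 0 := by
      intro i; by_contra h
      have hmem : i ∈ Finset.univ.filter (fun i => c i ≠ 0) := by simp [h]
      have := Finset.card_pos.mpr ⟨i, hmem⟩; omega
    have : IsEmpty {i // c i ≠ 0} := ⟨fun ⟨i, hi⟩ => hi (hz i)⟩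
    exact linearIndependent_empty_type
  | succ N ih =>
    intro c hcard hc
    by_cases hli : LinearIndependent ℝ (fun i : {i // c i ≠ 0} => g i.1)
    · exact ⟨c, hc, rfl, hli⟩
    obtain ⟨d0, hd0sum, j, hj⟩ := Fintype.not_linearIndependent_iff.mp hli
    set s : Finset ι := Finset.univ.filter (fun i => c i ≠ 0) with hs
    -- extend d0 to ι
    have key : ∀ e : ι → ℝ, (∀ i, c i = 0 → e i = 0) → (∑ i, e i • g i = 0) →
        (∃ i, 0 < e i) →
        ∃ c' : ι → ℝ, 0 ≤ c' ∧ ∑ i, c' i • g i = ∑ i, c i • g i ∧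
          LinearIndependent ℝ (fun i : {i // c' i ≠ 0} => g i.1) := by
      intro e hsupp hesum ⟨ip, hip⟩
      set P : Finset ι := Finset.univ.filter (fun i => 0 < e i) with hP
      obtain ⟨i₀, hi₀P, hi₀min⟩ := Finset.exists_min_image P (fun i => c i / e i)
        ⟨ip, by simp [hP, hip]⟩
      have he₀ : 0 < e i₀ := by simpa [hP] using hi₀P
      set t : ℝ := c i₀ / e i₀ with ht
      have ht0 : 0 ≤ t := div_nonneg (hc i₀) he₀.le
      set c'' : ι → ℝ := fun i => c i - t * e i with hc''
      have hc''nn : 0 ≤ c'' := by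
        intro i
        by_cases hei : 0 < e i
        · have : t ≤ c i / e i := hi₀min i (by simp [hP, hei])
          have := (le_div_iff₀ hei).mp this
          simp only [hc'', Pi.zero_apply]; linarith
        · push_neg at hei
          have : t * e i ≤ 0 := mul_nonpos_of_nonneg_of_nonpos ht0 hei
          simp only [hc'', Pi.zero_apply]
          have := hc i
          simp only [Pi.zero_apply] at this
          linarith
      have hc''sum : ∑ i, c'' i • g i = ∑ i, c i • g i := by
        have h1 : ∑ x : ι, (t * e x) • g x = (0:E) := by
          have h2 : ∑ x : ι, (t * e x) • g x = t • ∑ x : ι, e x • g x := by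
            rw [Finset.smul_sum]
            exact Finset.sum_congr rfl fun i _ => (smul_smul t (e i) (g i)).symm
          rw [h2, hesum, smul_zero]
        simp only [hc'', sub_smul, Finset.sum_sub_distrib, h1, sub_zero]
      have hc''card : (Finset.univ.filter (fun i => c'' i ≠ 0)).card ≤ N := by
        have hsub : Finset.univ.filter (fun i => c'' i ≠ 0) ⊆ s.erase i₀ := by
          intro i hi
          simp only [Finset.mem_filter, Finset.mem_univ, true_and] at hi
          rw [Finset.mem_erase]
          constructor
          · rintro rfl
            apply hi
            simp only [hc'', ht]
            field_simp
            ring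
          · simp only [hs, Finset.mem_filter, Finset.mem_univ, true_and]
            intro hci
            exact hi (by simp [hc'', hci, hsupp i hci])
        have hi₀s : i₀ ∈ s := by
          simp only [hs, Finset.mem_filter, Finset.mem_univ, true_and]
          intro h
          exact absurd (hsupp i₀ h) (ne_of_gt he₀)
        calc (Finset.univ.filter (fun i => c'' i ≠ 0)).card ≤ (s.erase i₀).card :=
              Finset.card_le_card hsub
          _ = s.card - 1 := Finset.card_erase_of_mem hi₀s
          _ ≤ N := by omega
      obtain ⟨c', h1, h2, h3⟩ := ih c'' hc''card hc''nn
      exact ⟨c', h1, h2.trans hc''sum, h3⟩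
    set d : ι → ℝ := fun i => if h : c i ≠ 0 then d0 ⟨i, h⟩ else 0 with hd
    have hdsum : ∑ i, d i • g i = 0 := by
      have h1 : ∑ i ∈ s, d i • g i = ∑ i : ι, d i • g i :=
        Finset.sum_subset (Finset.subset_univ s) (by
          intro i _ hi
          simp only [hs, Finset.mem_filter, Finset.mem_univ, true_and, not_not] at hi
          simp [hd, hi])
      have h2 : ∑ i ∈ s, d i • g i = ∑ i : {i // c i ≠ 0}, d i.1 • g i.1 :=
        Finset.sum_subtype s (by simp [hs]) (fun i => d i • g i)
      have h3 : ∑ i : {i // c i ≠ 0}, d i.1 • g i.1 = ∑ i : {i // c i ≠ 0}, d0 i • g i.1 :=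
        Finset.sum_congr rfl (fun i _ => by simp [hd, i.2])
      rw [← h1, h2, h3, hd0sum]
    have hdj : d j.1 = d0 j := by simp [hd, j.2]
    by_cases hpos : ∃ i, 0 < d i
    · exact key d (fun i hci => by simp [hd, hci]) hdsum hpos
    · push_neg at hpos
      have hdjlt : d j.1 < 0 := lt_of_le_of_ne (hpos j.1) (by rw [hdj]; exact hj)
      refine key (-d) (fun i hci => by simp [hd, hci]) ?_ ⟨j.1, by simp [hdjlt]⟩
      have h4 : ∑ i : ι, (-d) i • g i = -∑ i : ι, d i • g i := by
        simp [neg_smul, Finset.sum_neg_distrib]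
      rw [h4, hdsum, neg_zero]


private lemma carath_cone {E : Type*} [AddCommGroup E] [Module ℝ E] {ι : Type*} [Fintype ι]
    (g : ι → E) (c : ι → ℝ) (hc : 0 ≤ c) :
    ∃ c' : ι → ℝ, 0 ≤ c' ∧ ∑ i, c' i • g i = ∑ i, c i • g i ∧
      LinearIndependent ℝ (fun i : {i // c' i ≠ 0} => g i.1) := by
  classical
  exact carath_aux g (Finset.univ.filter (fun i => c i ≠ 0)).card c le_rfl hc

private lemma isClosed_fg_cone {E : Type*} [NormedAddCommGroup E] [NormedSpace ℝ E]
    {ι : Type*} [Fintype ι] (g : ι → E) :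
    IsClosed {x : E | ∃ c : ι → ℝ, 0 ≤ c ∧ x = ∑ i, c i • g i} := by
  classical
  have hrw : {x : E | ∃ c : ι → ℝ, 0 ≤ c ∧ x = ∑ i, c i • g i} =
      ⋃ (s : Finset ι) (_ : LinearIndependent ℝ (fun i : {i // i ∈ s} => g i.1)),
        (fun c : {i // i ∈ s} → ℝ => ∑ i : {i // i ∈ s}, c i • g i.1) '' {c | 0 ≤ c} := by
    ext x
    simp only [Set.mem_setOf_eq, Set.mem_iUnion, Set.mem_image]
    constructor
    · rintro ⟨c, hc, rfl⟩
      obtain ⟨c', hc', hsum, hli⟩ := carath_cone g c hc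
      set s : Finset ι := Finset.univ.filter (fun i => c' i ≠ 0) with hs
      have hmem : ∀ i : ι, i ∈ s ↔ c' i ≠ 0 := by simp [hs]
      refine ⟨s, ?_, fun i => c' i.1, fun i => hc' i.1, ?_⟩
      · exact (linearIndependent_equiv' (Equiv.subtypeEquivRight hmem) rfl).mpr hli
      · rw [← hsum, Finset.sum_coe_sort s (fun i => c' i • g i)]
        apply Finset.sum_subset (Finset.subset_univ s)
        intro i _ hi
        simp only [hmem, not_not] at hi
        simp [hi]
    · rintro ⟨s, hli, c, hc, rfl⟩
      refine ⟨fun i => if h : i ∈ s then c ⟨i, h⟩ else 0, fun i => ?_, ?_⟩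
      · by_cases h : i ∈ s
        · simpa [h] using hc ⟨i, h⟩
        · simp [h]
      · have h1 : ∑ i : {i // i ∈ s}, c i • g i.1
            = ∑ i : {i // i ∈ s}, (fun j => (if h : j ∈ s then c ⟨j, h⟩ else 0) • g j) i.1 :=
          Finset.sum_congr rfl fun i _ => by simp [i.2]
        rw [h1, Finset.sum_coe_sort s (fun j => (if h : j ∈ s then c ⟨j, h⟩ else 0) • g j)]
        apply Finset.sum_subset (Finset.subset_univ s)
        intro i _ hi
        simp [hi]
  rw [hrw]
  refine isClosed_iUnion_of_finite fun s => isClosed_iUnion_of_finite fun hli => ?_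
  set L := Fintype.linearCombination ℝ (fun i : {i // i ∈ s} => g i.1) with hL
  have hker : LinearMap.ker L = ⊥ := by
    rw [LinearMap.ker_eq_bot']
    intro c hc
    funext i
    exact Fintype.linearIndependent_iff.mp hli c hc i
  have hemb := LinearMap.isClosedEmbedding_of_injective (f := L) hker
  have hcl : IsClosed {c : {i // i ∈ s} → ℝ | 0 ≤ c} := by
    have : {c : {i // i ∈ s} → ℝ | 0 ≤ c} = ⋂ i, {c | 0 ≤ c i} := by
      ext c; simp [Pi.le_def]
    rw [this]
    exact isClosed_iInter fun i => isClosed_le continuous_const (continuous_apply i)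
  have := hemb.isClosedMap _ hcl
  convert this using 2
  simp [hL, Fintype.linearCombination_apply]

private lemma lp_exists {m n : ℕ} (A : Matrix (Fin m) (Fin n) ℝ) (d cost : Fin n → ℝ)
    (hd : 0 ≤ d) (L : ℝ)
    (hbdd : ∀ x : Fin n → ℝ, 0 ≤ x → A *ᵥ x = A *ᵥ d → L ≤ cost ⬝ᵥ x) :
    ∃ x : Fin n → ℝ, A *ᵥ x = A *ᵥ d ∧ 0 ≤ x ∧
      ∀ x' : Fin n → ℝ, A *ᵥ x' = A *ᵥ d → 0 ≤ x' → cost ⬝ᵥ x ≤ cost ⬝ᵥ x' := by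
  classical
  set g : Fin n → (Fin m → ℝ) × ℝ := fun i => (fun j => A j i, cost i) with hg
  have hsum : ∀ x : Fin n → ℝ, ∑ i, x i • g i = (A *ᵥ x, cost ⬝ᵥ x) := by
    intro x
    refine Prod.ext ?_ ?_
    · rw [Prod.fst_sum]
      funext j
      rw [Finset.sum_apply]
      simp [hg, Matrix.mulVec, dotProduct, mul_comm]
    · rw [Prod.snd_sum]
      simp [hg, dotProduct, mul_comm]
  have hC : IsClosed {z : (Fin m → ℝ) × ℝ | ∃ c : Fin n → ℝ, 0 ≤ c ∧ z = ∑ i, c i • g i} :=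
    isClosed_fg_cone g
  set T : Set ℝ := {t | ∃ c : Fin n → ℝ, 0 ≤ c ∧ ((A *ᵥ d, t) : (Fin m → ℝ) × ℝ) = ∑ i, c i • g i}
    with hT
  have hTclosed : IsClosed T := by
    have : T = (fun t : ℝ => ((A *ᵥ d, t) : (Fin m → ℝ) × ℝ)) ⁻¹'
        {z | ∃ c : Fin n → ℝ, 0 ≤ c ∧ z = ∑ i, c i • g i} := rfl
    rw [this]
    exact hC.preimage (Continuous.prodMk continuous_const continuous_id)
  have hmemT : ∀ t ∈ T, ∃ x : Fin n → ℝ, 0 ≤ x ∧ A *ᵥ x = A *ᵥ d ∧ cost ⬝ᵥ x = t := by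
    rintro t ⟨x, hx0, hxe⟩
    rw [hsum x, Prod.mk.injEq] at hxe
    exact ⟨x, hx0, hxe.1.symm, hxe.2.symm⟩
  have hTne : (cost ⬝ᵥ d) ∈ T := ⟨d, hd, (hsum d).symm⟩
  have hTbdd : BddBelow T := by
    refine ⟨L, fun t ht => ?_⟩
    obtain ⟨x, hx0, hxA, hxc⟩ := hmemT t ht
    rw [← hxc]
    exact hbdd x hx0 hxA
  have ht0 := hTclosed.csInf_mem ⟨_, hTne⟩ hTbdd
  obtain ⟨x, hx0, hxA, hxc⟩ := hmemT _ ht0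
  refine ⟨x, hxA, hx0, fun x' hA' h0' => ?_⟩
  rw [hxc]
  exact csInf_le hTbdd ⟨x', h0', by rw [hsum x', hA']⟩

-- dot product bridging lemma
private lemma transpose_mulVec_dot {p n : ℕ} (B : Matrix (Fin p) (Fin n) ℝ)
    (β : Fin p → ℝ) (w : Fin n → ℝ) :
    (Bᵀ *ᵥ β) ⬝ᵥ w = β ⬝ᵥ (B *ᵥ w) := by
  rw [Matrix.mulVec_transpose, ← Matrix.dotProduct_mulVec]

private lemma mulVec_eq_zero_of_dot {p n : ℕ} (P : Matrix (Fin p) (Fin n) ℝ)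
    (w : Fin n → ℝ) (h : ∀ β : Fin p → ℝ, (Pᵀ *ᵥ β) ⬝ᵥ w = 0) : P *ᵥ w = 0 := by
  funext k
  have := h (Pi.single k 1)
  rw [transpose_mulVec_dot] at this
  simpa [dotProduct, Pi.single_apply] using this

private lemma cost_decomp {m l r n : ℕ}
    (A : Matrix (Fin m) (Fin n) ℝ) (B : Matrix (Fin l) (Fin n) ℝ)
    (M : Matrix (Fin r) (Fin n) ℝ) (c y : Fin n → ℝ) (u : Fin r → ℝ)
    (hA1 : Assumption1 A B M) (hA2 : Assumption2 M)
    (hBy : B *ᵥ y = B *ᵥ c) (hMy : M *ᵥ y = M *ᵥ c + u) :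
    ∃ α : Fin m → ℝ, c + Mᵀ *ᵥ u = y - Aᵀ *ᵥ α := by
  obtain ⟨hAB, hAM, hBM, htop⟩ := hA1
  have hmem : y - c ∈ (⊤ : Submodule ℝ (Fin n → ℝ)) := trivial
  rw [← htop] at hmem
  obtain ⟨pq, hpq, w, hw, hsum⟩ := Submodule.mem_sup.mp hmem
  obtain ⟨p, hp, q, hq, rfl⟩ := Submodule.mem_sup.mp hpq
  obtain ⟨α, rfl⟩ := hp
  obtain ⟨β, rfl⟩ := hq
  obtain ⟨γ, rfl⟩ := hw
  simp only [Matrix.mulVecLin_apply] at hsum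
  -- B(y-c) = 0
  have hB0 : B *ᵥ (y - c) = 0 := by rw [Matrix.mulVec_sub, hBy, sub_self]
  -- Bᵀ β = 0
  have hBβ : Bᵀ *ᵥ β = (0 : Fin n → ℝ) := by
    have h1 : (Bᵀ *ᵥ β) ⬝ᵥ (y - c) = 0 := by
      rw [transpose_mulVec_dot, hB0, dotProduct_zero]
    rw [← hsum] at h1
    rw [dotProduct_add, dotProduct_add] at h1
    rw [dotProduct_comm (Bᵀ *ᵥ β) (Aᵀ *ᵥ α)] at h1
    rw [hAB α β, hBM β γ, zero_add, add_zero] at h1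
    exact dotProduct_self_eq_zero.mp h1
  -- M(y-c) = γ
  have hMA : M *ᵥ (Aᵀ *ᵥ α) = 0 := by
    apply mulVec_eq_zero_of_dot
    intro β'
    rw [dotProduct_comm]
    exact hAM α β'
  rw [hBβ, add_zero] at hsum
  have hMM : M *ᵥ (Mᵀ *ᵥ γ) = γ := by
    rw [Matrix.mulVec_mulVec, hA2, Matrix.one_mulVec]
  have hMyc : M *ᵥ (y - c) = u := by
    rw [Matrix.mulVec_sub, hMy, add_sub_cancel_left]
  have hγu : γ = u := by
    rw [← hMyc, ← hsum, Matrix.mulVec_add, hMA, hMM, zero_add]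
  refine ⟨α, ?_⟩
  rw [← hγu]
  funext i
  have h := congrFun hsum i
  simp only [Pi.add_apply, Pi.sub_apply] at h ⊢
  linarith

end AuxLP

/-- For every `u ∈ Θ_D`, the perturbed primal has an optimal solution and
`Φ(u)` is a nonempty subset of `Θ_P`. -/
theorem Phi_nonempty_subset_ThetaP {m l r n : ℕ}
    (A : Matrix (Fin m) (Fin n) ℝ) (B : Matrix (Fin l) (Fin n) ℝ)
    (M : Matrix (Fin r) (Fin n) ℝ) (c d : Fin n → ℝ)
    (hd : 0 ≤ d) (hc : 0 ≤ c)
    (hA1 : Assumption1 A B M) (hA2 : Assumption2 M)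
    (u : Fin r → ℝ) (hu : u ∈ ThetaD B M c) :
    (∃ x : Fin n → ℝ, OptimalFor A d (c + Mᵀ *ᵥ u) x) ∧
      (Phi A M c d u).Nonempty ∧ Phi A M c d u ⊆ ThetaP A M d := by
  
  obtain ⟨y, hy0, hBy, hMy⟩ := hu
  obtain ⟨α, hcost⟩ := cost_decomp A B M c y u hA1 hA2 hBy hMy
  have hbdd : ∀ x : Fin n → ℝ, 0 ≤ x → A *ᵥ x = A *ᵥ d →
      -(α ⬝ᵥ (A *ᵥ d)) ≤ (c + Mᵀ *ᵥ u) ⬝ᵥ x := by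
    intro x hx hAx
    rw [hcost, sub_dotProduct]
    have h1 : (Aᵀ *ᵥ α) ⬝ᵥ x = α ⬝ᵥ (A *ᵥ d) := by rw [transpose_mulVec_dot, hAx]
    have h2 : 0 ≤ y ⬝ᵥ x := by
      have : 0 ≤ ∑ i, y i * x i := Finset.sum_nonneg fun i _ => mul_nonneg (hy0 i) (hx i)
      simpa [dotProduct] using this
    rw [h1]
    linarith
  obtain ⟨x, hxA, hx0, hxopt⟩ := lp_exists A d (c + Mᵀ *ᵥ u) hd _ hbdd
  have hopt : OptimalFor A d (c + Mᵀ *ᵥ u) x := ⟨hxA, hx0, hxopt⟩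
  refine ⟨⟨x, hopt⟩, ⟨M *ᵥ (x - d), x, hopt, rfl⟩, ?_⟩
  rintro v ⟨x', ⟨hA', h0', _⟩, rfl⟩
  refine ⟨x', h0', hA', ?_⟩
  rw [Matrix.mulVec_sub]
  abel
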